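/- Let G be a finite weighted complete graph with weights in [0,1] and G_ε its ε-thresholded version. The map sending each finite persistence point (0,d) of D_0(G) with d ≤ ε to itself, each point with ε < d ≤ 1 to (0,1), and the essential point to the essential point, is a bijection between D_0(G) and D_0(G_ε), and its per-point displacement is 0 for d ≤ ε and |1 − d| < 1 − ε for ε < d ≤ 1. -/

import Mathlib

open scoped Classical
noncomputable section

variable {V : Type*} [Fintype V]

/-- Vietoris–Rips 1-skeleton of a weighted complete graph at scale `α`. -/
def vrGraph (w : V → V → ℝ) (α : ℝ) : SimpleGraph V where
  Adj i j := i ≠ j ∧ max (w i j) (w j i) ≤ α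
  symm := by
    constructor
    intro i j h
    exact ⟨h.1.symm, by rw [max_comm]; exact h.2⟩
  loopless := ⟨fun i h => h.1 rfl⟩

/-- Number of connected components of the Rips 1-skeleton at scale `α`. -/
def compCount (w : V → V → ℝ) (α : ℝ) : ℕ :=
  Nat.card (vrGraph w α).ConnectedComponent

/-- Left limit of the component counting function at `d`. -/
def compCountLeft (w : V → V → ℝ) (d : ℝ) : ℕ :=
  sInf (compCount w '' Set.Iio d)

/-- Multiplicity of `d` as a finite death time in the `H₀` persistence diagram. -/
def deathMult (w : V → V → ℝ) (d : ℝ) : ℕ :=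
  compCountLeft w d - compCount w d

/-- The finitely many candidate filtration values (the edge weights). -/
def weightVals (w : V → V → ℝ) : Finset ℝ :=
  Finset.image (fun p : V × V => max (w p.1 p.2) (w p.2 p.1)) Finset.univ

/-- The multiset of finite death times of the 0-dimensional persistence diagram
of the Vietoris–Rips filtration of the weighted complete graph `w`. -/
def finiteDeaths (w : V → V → ℝ) : Multiset ℝ :=
  (weightVals w).val.bind fun d => Multiset.replicate (deathMult w d) d

/-- The 0-dimensional persistence diagram (finite points; all births are `0`). -/
def D0 (w : V → V → ℝ) : Multiset (ℝ × ℝ) :=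
  (finiteDeaths w).map fun d => (0, d)

/-- Threshold modification: weights above `ε` are raised to `1`. -/
def thresh (w : V → V → ℝ) (ε : ℝ) : V → V → ℝ :=
  fun i j => if w i j ≤ ε then w i j else 1


-- Auxiliary lemmas

lemma vrGraph_eq_of_gap (w : V → V → ℝ) {a b : ℝ} (hab : a ≤ b)
    (h : ∀ u ∈ weightVals w, ¬ (a < u ∧ u ≤ b)) : vrGraph w a = vrGraph w b := by
  ext i j
  constructor
  · rintro ⟨hne, hle⟩; exact ⟨hne, hle.trans hab⟩
  · rintro ⟨hne, hle⟩
    refine ⟨hne, ?_⟩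
    by_contra hgt
    push_neg at hgt
    exact h _ (Finset.mem_image.2 ⟨(i, j), Finset.mem_univ _, rfl⟩) ⟨hgt, hle⟩

lemma compCount_antitone (w : V → V → ℝ) : Antitone (compCount w) := by
  intro a b hab
  let φ : vrGraph w a →g vrGraph w b :=
    ⟨id, fun {i j} h => ⟨h.1, h.2.trans hab⟩⟩
  have hsurj : Function.Surjective (SimpleGraph.ConnectedComponent.map φ) := by
    intro c
    refine SimpleGraph.ConnectedComponent.ind (fun v => ?_) c
    exact ⟨(vrGraph w a).connectedComponentMk v, rfl⟩
  exact Nat.card_le_card_of_surjective _ hsurj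

lemma compCountLeft_eq (w : V → V → ℝ) {a d : ℝ} (had : a < d)
    (h : ∀ u ∈ weightVals w, ¬ (a < u ∧ u < d)) :
    compCountLeft w d = compCount w a := by
  apply IsLeast.csInf_eq
  constructor
  · exact ⟨a, had, rfl⟩
  · rintro n ⟨β, hβ, rfl⟩
    rcases le_or_gt β a with hba | hba
    · exact compCount_antitone w hba
    · have he : vrGraph w a = vrGraph w β :=
        vrGraph_eq_of_gap w hba.le
          (fun u hu hc => h u hu ⟨hc.1, lt_of_le_of_lt hc.2 hβ⟩)
      simp [compCount, he]

lemma compCount_le_compCountLeft (w : V → V → ℝ) (d : ℝ) :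
    compCount w d ≤ compCountLeft w d := by
  refine le_csInf ⟨compCount w (d - 1), ⟨d - 1, by simp, rfl⟩⟩ ?_
  rintro n ⟨β, hβ, rfl⟩
  exact compCount_antitone w (le_of_lt hβ)

lemma deathMult_eq_zero_of_not_mem (w : V → V → ℝ) {v : ℝ} (hv : v ∉ weightVals w) :
    deathMult w v = 0 := by
  obtain ⟨a, hav, ha⟩ : ∃ a, a < v ∧ ∀ u ∈ weightVals w, ¬ (a < u ∧ u ≤ v) := by
    by_cases hS : ((weightVals w).filter (fun x => x < v)).Nonempty
    · refine ⟨((weightVals w).filter (fun x => x < v)).max' hS, ?_, ?_⟩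
      · exact (Finset.mem_filter.1 (((weightVals w).filter (fun x => x < v)).max'_mem hS)).2
      · rintro u hu ⟨h1, h2⟩
        rcases h2.lt_or_eq with h2 | h2
        · have hmem : u ∈ (weightVals w).filter (fun x => x < v) :=
            Finset.mem_filter.2 ⟨hu, h2⟩
          exact absurd (Finset.le_max' _ u hmem) (not_le.2 h1)
        · exact hv (h2 ▸ hu)
    · refine ⟨v - 1, by linarith, ?_⟩
      rintro u hu ⟨h1, h2⟩
      rcases h2.lt_or_eq with h2 | h2
      · exact hS ⟨u, Finset.mem_filter.2 ⟨hu, h2⟩⟩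

      · exact hv (h2 ▸ hu)
  have h1 : compCountLeft w v = compCount w a :=
    compCountLeft_eq w hav (fun u hu hc => ha u hu ⟨hc.1, hc.2.le⟩)
  have h2 : vrGraph w a = vrGraph w v := vrGraph_eq_of_gap w hav.le ha
  simp [deathMult, h1, compCount, h2]

lemma count_finiteDeaths (w : V → V → ℝ) (v : ℝ) :
    (finiteDeaths w).count v = deathMult w v := by
  rw [finiteDeaths, Multiset.count_bind]
  have h1 : ((weightVals w).val.map fun d => (Multiset.replicate (deathMult w d) d).count v)
      = (weightVals w).val.map fun d => if d = v then deathMult w d else 0 :=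
    Multiset.map_congr rfl (fun d _ => Multiset.count_replicate v d _)
  rw [h1]
  have h2 : ((weightVals w).val.map fun d => if d = v then deathMult w d else 0).sum
      = ∑ d ∈ weightVals w, if d = v then deathMult w d else 0 := rfl
  rw [h2, Finset.sum_ite_eq' (weightVals w) v (fun d => deathMult w d)]
  split
  · rfl
  · exact (deathMult_eq_zero_of_not_mem w ‹_›).symm

lemma telescope (w : V → V → ℝ) {b : ℝ} (hb : ∀ u ∈ weightVals w, u ≤ b) :
    ∀ n (a : ℝ), a ≤ b → ((weightVals w).filter (fun d => a < d)).card = n →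
    ∑ d ∈ (weightVals w).filter (fun d => a < d), deathMult w d
      = compCount w a - compCount w b := by
  intro n
  induction n with
  | zero =>
    intro a hab hcard
    have hemp : (weightVals w).filter (fun d => a < d) = ∅ := Finset.card_eq_zero.1 hcard
    have he : vrGraph w a = vrGraph w b := by
      apply vrGraph_eq_of_gap w hab
      rintro u hu ⟨h1, _⟩
      have : u ∈ (weightVals w).filter (fun d => a < d) := Finset.mem_filter.2 ⟨hu, h1⟩
      simp [hemp] at this
    simp [hemp, compCount, he]
  | succ n ih =>
    intro a hab hcard
    set T := (weightVals w).filter (fun d => a < d) with hT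
    have hne : T.Nonempty := Finset.card_pos.1 (by omega)
    set d₁ := T.min' hne with hd₁
    have hd₁T : d₁ ∈ T := T.min'_mem hne
    have hd₁w : d₁ ∈ weightVals w := (Finset.mem_filter.1 hd₁T).1
    have had₁ : a < d₁ := (Finset.mem_filter.1 hd₁T).2
    have hd₁b : d₁ ≤ b := hb _ hd₁w
    have herase : T.erase d₁ = (weightVals w).filter (fun d => d₁ < d) := by
      ext u
      simp only [Finset.mem_erase, hT, Finset.mem_filter]
      constructor
      · rintro ⟨hne', hu, hau⟩
        exact ⟨hu, lt_of_le_of_ne (T.min'_le u (Finset.mem_filter.2 ⟨hu, hau⟩)) (Ne.symm hne')⟩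
      · rintro ⟨hu, hdu⟩
        exact ⟨(ne_of_lt hdu).symm, hu, had₁.trans hdu⟩
    have hL : compCountLeft w d₁ = compCount w a := by
      apply compCountLeft_eq w had₁
      rintro u hu ⟨h1, h2⟩
      exact absurd (T.min'_le u (Finset.mem_filter.2 ⟨hu, h1⟩)) (not_le.2 h2)
    have hsum : ∑ d ∈ T, deathMult w d
        = deathMult w d₁ + ∑ d ∈ T.erase d₁, deathMult w d :=
      (Finset.add_sum_erase T _ hd₁T).symm
    have hcard' : ((weightVals w).filter (fun d => d₁ < d)).card = n := by
      rw [← herase, Finset.card_erase_of_mem hd₁T, hcard]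
      omega
    have hih := ih d₁ hd₁b hcard'
    have h1 : compCount w d₁ ≤ compCountLeft w d₁ := compCount_le_compCountLeft w d₁
    have h2 : compCount w b ≤ compCount w d₁ := compCount_antitone w hd₁b
    have h3 : compCount w d₁ ≤ compCount w a := compCount_antitone w had₁.le
    rw [hsum, herase, hih]
    simp only [deathMult, hL]
    omega

lemma thresh_vrGraph_lt (w : V → V → ℝ) (hsymm : ∀ i j, w i j = w j i)
    {ε α : ℝ} (hα : α < 1) :
    vrGraph (thresh w ε) α = vrGraph w (min α ε) := by
  ext i j
  have hs : w j i = w i j := (hsymm i j).symm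
  show i ≠ j ∧ max (thresh w ε i j) (thresh w ε j i) ≤ α
      ↔ i ≠ j ∧ max (w i j) (w j i) ≤ min α ε
  rw [show thresh w ε j i = thresh w ε i j by simp [thresh, hs], hs, max_self, max_self]
  constructor
  · rintro ⟨hne, hle⟩
    refine ⟨hne, ?_⟩
    rw [le_min_iff]
    unfold thresh at hle
    split_ifs at hle with h
    · exact ⟨hle, h⟩
    · linarith
  · rintro ⟨hne, hle⟩
    rw [le_min_iff] at hle
    exact ⟨hne, by simp [thresh, hle.2]; exact hle.1⟩

lemma thresh_vrGraph_ge (w : V → V → ℝ) (hw1 : ∀ i j, w i j ≤ 1)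
    {ε α : ℝ} (hα : 1 ≤ α) :
    vrGraph (thresh w ε) α = vrGraph w α := by
  ext i j
  show i ≠ j ∧ max (thresh w ε i j) (thresh w ε j i) ≤ α
      ↔ i ≠ j ∧ max (w i j) (w j i) ≤ α
  have t1 : thresh w ε i j ≤ α := by
    unfold thresh; split_ifs with h
    · exact (hw1 i j).trans hα
    · exact hα
  have t2 : thresh w ε j i ≤ α := by
    unfold thresh; split_ifs with h
    · exact (hw1 j i).trans hα
    · exact hα
  have t3 : max (w i j) (w j i) ≤ α := max_le ((hw1 i j).trans hα) ((hw1 j i).trans hα)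
  simp [t1, t2, t3]

lemma weightVals_thresh (w : V → V → ℝ) (hsymm : ∀ i j, w i j = w j i) (ε : ℝ) :
    weightVals (thresh w ε) = (weightVals w).image (fun x => if x ≤ ε then x else 1) := by
  unfold weightVals
  rw [Finset.image_image]
  apply Finset.image_congr
  intro p _
  have hs : w p.2 p.1 = w p.1 p.2 := (hsymm p.1 p.2).symm
  simp [thresh, Function.comp, hs, max_self]

lemma mem_weightVals_bounds (w : V → V → ℝ) (hw0 : ∀ i j, 0 ≤ w i j)
    (hw1 : ∀ i j, w i j ≤ 1) {u : ℝ} (hu : u ∈ weightVals w) : 0 ≤ u ∧ u ≤ 1 := by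
  obtain ⟨p, _, rfl⟩ := Finset.mem_image.1 hu
  exact ⟨le_max_iff.2 (Or.inl (hw0 _ _)), max_le (hw1 _ _) (hw1 _ _)⟩

/-- The map sending each finite death `d ≤ ε` of `G` to itself
and each finite death `d > ε` to `1` is a bijection from the finite part of
`D₀(G)` onto the finite part of `D₀(G_ε)` (the essential class maps to the
essential class); its per-point displacement is `0` when `d ≤ ε` and
`|1 - d| < 1 - ε` when `ε < d ≤ 1`. -/
theorem explicit_bijection_thresholded
    {N : ℕ} (w : Fin N → Fin N → ℝ)
    (hw0 : ∀ i j, 0 ≤ w i j) (hw1 : ∀ i j, w i j ≤ 1)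
    (hsymm : ∀ i j, w i j = w j i)
    (ε : ℝ) (hε0 : 0 ≤ ε) (hε1 : ε ≤ 1) :
    finiteDeaths (thresh w ε)
      = (finiteDeaths w).map (fun d => if d ≤ ε then d else 1) ∧
    (∀ d ∈ finiteDeaths w, d ≤ 1) ∧
    (∀ d ∈ finiteDeaths w,
      (d ≤ ε → |(if d ≤ ε then d else 1) - d| = 0) ∧
      (ε < d → |1 - d| < 1 - ε)) := by
  have hwv1 : ∀ u ∈ weightVals w, u ≤ 1 := fun u hu =>
    (mem_weightVals_bounds w hw0 hw1 hu).2
  have hmemle : ∀ d ∈ finiteDeaths w, d ≤ 1 := by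
    intro d hd
    rw [finiteDeaths] at hd
    obtain ⟨u, hu, hd⟩ := Multiset.mem_bind.1 hd
    rw [Multiset.eq_of_mem_replicate hd]
    exact hwv1 u hu
  refine ⟨?_, hmemle, ?_⟩
  · have hC1 : ∀ α : ℝ, α ≤ ε → compCount (thresh w ε) α = compCount w α := by
      intro α hα
      rcases lt_or_ge α 1 with h | h
      · simp only [compCount, thresh_vrGraph_lt w hsymm h, min_eq_left hα]
      · simp only [compCount, thresh_vrGraph_ge w hw1 h]
    have hC2 : ∀ α : ℝ, ε < α → α < 1 → compCount (thresh w ε) α = compCount w ε := by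
      intro α h1 h2
      simp only [compCount, thresh_vrGraph_lt w hsymm h2, min_eq_right h1.le]
    refine Multiset.ext.2 fun v => ?_
    rw [count_finiteDeaths]
    rw [finiteDeaths, Multiset.map_bind, Multiset.count_bind]
    have hmapped : ((weightVals w).val.map fun d =>
        (Multiset.map (fun d => if d ≤ ε then d else 1)
          (Multiset.replicate (deathMult w d) d)).count v)
        = (weightVals w).val.map fun d =>
            if (if d ≤ ε then d else 1) = v then deathMult w d else 0 := by
      refine Multiset.map_congr rfl fun d _ => ?_
      rw [Multiset.map_replicate, Multiset.count_replicate]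
    rw [hmapped]
    have hsum : ((weightVals w).val.map fun d =>
        if (if d ≤ ε then d else 1) = v then deathMult w d else 0).sum
        = ∑ d ∈ weightVals w,
            if (if d ≤ ε then d else 1) = v then deathMult w d else 0 := rfl
    rw [hsum]
    rcases le_or_gt v ε with hvε | hεv
    · -- v ≤ ε
      have hL : deathMult (thresh w ε) v = deathMult w v := by
        have hcl : compCountLeft (thresh w ε) v = compCountLeft w v := by
          unfold compCountLeft
          congr 1
          exact Set.image_congr fun α hα => hC1 α (le_of_lt (lt_of_lt_of_le hα hvε))
        unfold deathMult
        rw [hcl, hC1 v hvε]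
      rw [hL]
      have hterm : (∑ d ∈ weightVals w,
          if (if d ≤ ε then d else 1) = v then deathMult w d else 0)
          = ∑ d ∈ weightVals w, if d = v then deathMult w d else 0 := by
        refine Finset.sum_congr rfl fun d hd => ?_
        rcases le_or_gt d ε with hdε | hdε
        · rw [if_pos hdε]
        · have hd1 : d ≤ 1 := hwv1 d hd
          rw [if_neg (not_le.2 hdε), if_neg (by rintro rfl; linarith),
            if_neg (by rintro rfl; linarith)]
      rw [hterm, Finset.sum_ite_eq' (weightVals w) v (fun d => deathMult w d)]
      split
      · rfl
      · exact deathMult_eq_zero_of_not_mem w ‹_›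
    · rcases lt_trichotomy v 1 with hv1 | hv1 | hv1
      · -- ε < v < 1
        have hεv1 : ε < 1 := hεv.trans hv1
        have hLHS : deathMult (thresh w ε) v = 0 := by
          have hcv : compCount (thresh w ε) v = compCount w ε := hC2 v hεv hv1
          have hcl : compCountLeft (thresh w ε) v = compCount w ε := by
            apply IsLeast.csInf_eq
            constructor
            · exact ⟨(ε + v) / 2, show (ε + v) / 2 < v by linarith,
                hC2 _ (by linarith) (by linarith)⟩
            · rintro n ⟨β, hβ, rfl⟩
              rcases le_or_gt β ε with h | h
              · rw [hC1 β h]; exact compCount_antitone w h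
              · rw [hC2 β h (lt_trans hβ hv1)]
          unfold deathMult
          rw [hcl, hcv, Nat.sub_self]
        rw [hLHS]
        refine (Finset.sum_eq_zero fun d hd => ?_).symm
        rcases le_or_gt d ε with h | h
        · rw [if_pos h, if_neg (by rintro rfl; linarith)]
        · rw [if_neg (not_le.2 h), if_neg (by rintro rfl; linarith)]
      · -- v = 1
        subst hv1
        have hε1' : ε < 1 := hεv
        have hcl : compCountLeft (thresh w ε) 1 = compCount w ε := by
          apply IsLeast.csInf_eq
          constructor
          · exact ⟨(ε + 1) / 2, show (ε + 1) / 2 < 1 by linarith,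
              hC2 _ (by linarith) (by linarith)⟩
          · rintro n ⟨β, hβ, rfl⟩
            rcases le_or_gt β ε with h | h
            · rw [hC1 β h]; exact compCount_antitone w h
            · rw [hC2 β h hβ]
        have hcv : compCount (thresh w ε) 1 = compCount w 1 := by
          simp only [compCount, thresh_vrGraph_ge w hw1 le_rfl]
        have hterm : ∀ d ∈ weightVals w,
            (if (if d ≤ ε then d else 1) = 1 then deathMult w d else 0)
            = if ε < d then deathMult w d else 0 := by
          intro d hd
          rcases le_or_gt d ε with h | h
          · rw [if_pos h, if_neg (not_lt.2 h), if_neg (by rintro rfl; linarith)]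
          · rw [if_neg (not_le.2 h), if_pos rfl, if_pos h]
        rw [Finset.sum_congr rfl hterm, ← Finset.sum_filter,
          telescope w hwv1 ((weightVals w).filter (fun d => ε < d)).card ε hε1'.le rfl]
        unfold deathMult
        rw [hcl, hcv]
      · -- v > 1
        have hnotmem : v ∉ weightVals (thresh w ε) := by
          rw [weightVals_thresh w hsymm]
          intro hmem
          obtain ⟨u, hu, hfu⟩ := Finset.mem_image.1 hmem
          have hu1 : u ≤ 1 := hwv1 u hu
          split_ifs at hfu <;> linarith [hfu]
        rw [deathMult_eq_zero_of_not_mem _ hnotmem]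
        refine (Finset.sum_eq_zero fun d hd => ?_).symm
        have hd1 : d ≤ 1 := hwv1 d hd
        rcases le_or_gt d ε with h | h
        · rw [if_pos h, if_neg (by rintro rfl; linarith)]
        · rw [if_neg (not_le.2 h), if_neg (by rintro rfl; linarith)]
  · intro d hd
    have hd1 : d ≤ 1 := hmemle d hd
    constructor
    · intro hdε
      rw [if_pos hdε]
      simp
    · intro hεd
      rw [abs_of_nonneg (by linarith)]
      linarith

end
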